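/- There is an absolute constant C > 0 with the following property: let w ∈ ℂ, r > 0, and let h be holomorphic on the open disc D(w,r) with M := sup_{z ∈ D(w,r)} |h(z)| < ∞ and m := sup_{|z−w| ≤ r/2} |h(z)| > 0. Then the number of zeros of h in the closed disc {z : |z−w| ≤ r/2}, counted with multiplicity (i.e. the sum over those zeros of the vanishing order of h), is at most C·log(M/m). -/

import Mathlib

open MeasureTheory Metric ENNReal

noncomputable section

/-- The vanishing order of a holomorphic function `h` at a point `z`: the order of the
first nonvanishing term of its power-series expansion at `z`, i.e. the least `n` such
that the `n`-th derivative of `h` does not vanish at `z`. -/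
def vanishingOrder (h : ℂ → ℂ) (z : ℂ) : ℕ :=
  sInf {n : ℕ | iteratedDeriv n h z ≠ 0}

namespace JensenAux

open Complex Filter Set Topology

/-! ### Bridge between `vanishingOrder` and `AnalyticAt.order` -/

lemma vanishingOrder_eq_of_order_eq {h : ℂ → ℂ} {z : ℂ} (hf : AnalyticAt ℂ h z) {n : ℕ}
    (hn : analyticOrderAt h z = (n : ℕ∞)) : vanishingOrder h z = n := by
  obtain ⟨p, hp⟩ := id hf
  have hp0 : p ≠ 0 := by
    intro h0
    have : analyticOrderAt h z = ⊤ := analyticOrderAt_eq_top.mpr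
      (HasFPowerSeriesAt.eventually_eq_zero (by rwa [h0] at hp))
    rw [this] at hn; exact (ENat.top_ne_coe n) hn
  have h1 : analyticOrderAt h z = (p.order : ℕ∞) := by
    rw [hf.analyticOrderAt_eq_natCast]
    exact ⟨_, ⟨_, hp.has_fpower_series_iterate_dslope_fslope p.order⟩,
      hp.iterate_dslope_fslope_ne_zero hp0, .of_forall hp.eq_pow_order_mul_iterate_dslope⟩
  have hnp : p.order = n := by
    rw [hn] at h1; exact_mod_cast h1.symm
  have hset : {k : ℕ | iteratedDeriv k h z ≠ 0} = {k : ℕ | p k ≠ 0} := by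
    ext k
    obtain ⟨R, hR⟩ := hp
    have h2 : k.factorial • p k (fun _ ↦ (1:ℂ)) = iteratedFDeriv ℂ k h z (fun _ ↦ (1:ℂ)) :=
      hR.factorial_smul (1 : ℂ) k
    have h3 : iteratedDeriv k h z = k.factorial • p.coeff k := by
      rw [iteratedDeriv_eq_iteratedFDeriv, ← h2]; rfl
    simp only [mem_setOf_eq, h3]
    rw [ne_eq, smul_eq_zero, not_or]
    simp [Nat.factorial_ne_zero, FormalMultilinearSeries.coeff_eq_zero]
  rw [vanishingOrder, hset, ← hnp]; rfl

lemma exists_order_eq_nat {h : ℂ → ℂ} {z : ℂ} (hf : AnalyticAt ℂ h z)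
    (hne : ¬ ∀ᶠ y in 𝓝 z, h y = 0) : ∃ n : ℕ, analyticOrderAt h z = (n : ℕ∞) := by
  have : analyticOrderAt h z ≠ ⊤ := fun ht => hne (analyticOrderAt_eq_top.mp ht)
  obtain ⟨n, hn⟩ := WithTop.ne_top_iff_exists.mp this
  exact ⟨n, hn.symm⟩

lemma order_ne_zero_of_eq_zero {h : ℂ → ℂ} {z : ℂ} (hf : AnalyticAt ℂ h z)
    (h0 : h z = 0) {n : ℕ} (hn : analyticOrderAt h z = (n : ℕ∞)) : n ≠ 0 := by
  intro hzero
  subst hzero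
  obtain ⟨g, hg, hgne, hev⟩ := hf.analyticOrderAt_eq_natCast.mp hn
  have := hev.self_of_nhds
  simp only [pow_zero, one_smul] at this
  rw [h0] at this
  exact hgne this.symm

lemma eq_at_of_eventuallyEq_punctured {f g : ℂ → ℂ} {a : ℂ} (hf : ContinuousAt f a)
    (hg : ContinuousAt g a) (h : ∀ᶠ z in 𝓝[≠] a, f z = g z) : f a = g a := by
  have h1 : Filter.Tendsto f (𝓝[≠] a) (𝓝 (f a)) := hf.tendsto.mono_left nhdsWithin_le_nhds
  have h2 : Filter.Tendsto g (𝓝[≠] a) (𝓝 (g a)) := hg.tendsto.mono_left nhdsWithin_le_nhds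
  exact tendsto_nhds_unique (h1.congr' h) h2

/-- Dividing out a zero by `dslope` decreases the order by one. -/
lemma order_dslope {h : ℂ → ℂ} {a : ℂ} (hf : AnalyticAt ℂ h a) (hf' : AnalyticAt ℂ (dslope h a) a)
    (h0 : h a = 0) {n : ℕ} (hn : analyticOrderAt h a = ((n + 1 : ℕ) : ℕ∞)) :
    analyticOrderAt (dslope h a) a = (n : ℕ∞) := by
  obtain ⟨g, hg, hgne, hev⟩ := hf.analyticOrderAt_eq_natCast.mp hn
  have hpunc : ∀ᶠ z in 𝓝[≠] a, dslope h a z = (z - a) ^ n • g z := by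
    filter_upwards [hev.filter_mono nhdsWithin_le_nhds, self_mem_nhdsWithin] with z hz hza
    have hza' : z - a ≠ 0 := sub_ne_zero.mpr hza
    rw [dslope_of_ne h hza, slope_def_field, h0, sub_zero, hz]
    field_simp [pow_succ]
    ring
  have hpt : dslope h a a = (a - a) ^ n • g a := by
    refine eq_at_of_eventuallyEq_punctured hf'.continuousAt ?_ hpunc
    exact (((analyticAt_id.sub analyticAt_const).pow n).smul hg).continuousAt
  have hev' : ∀ᶠ z in 𝓝 a, dslope h a z = (z - a) ^ n • g z := by
    have := eventually_nhdsWithin_iff.mp hpunc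
    filter_upwards [this] with z hz
    by_cases hza : z = a
    · subst hza; exact hpt
    · exact hz hza
  exact hf'.analyticOrderAt_eq_natCast.mpr ⟨g, hg, hgne, hev'⟩

/-- Multiplying by an analytic function non-vanishing at the point preserves the order. -/
lemma order_mul_unit {f ψ : ℂ → ℂ} {b : ℂ} (hf : AnalyticAt ℂ f b)
    (hψ : AnalyticAt ℂ ψ b) (hψ0 : ψ b ≠ 0)
    (hg : AnalyticAt ℂ (fun z => f z * ψ z) b) {n : ℕ}
    (hn : analyticOrderAt f b = (n : ℕ∞)) : analyticOrderAt (fun z => f z * ψ z) b = (n : ℕ∞) := by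
  obtain ⟨G, hG, hGne, hev⟩ := hf.analyticOrderAt_eq_natCast.mp hn
  refine hg.analyticOrderAt_eq_natCast.mpr ⟨fun z => G z * ψ z, hG.mul hψ, by
      simp [hGne, hψ0], ?_⟩
  filter_upwards [hev] with z hz
  simp only [hz, smul_eq_mul]
  ring

/-! ### Blaschke-factor inequalities -/

lemma normSq_blaschke_identity (r : ℝ) (u v : ℂ) :
    r^2 * Complex.normSq (v - u) + (r^2 - Complex.normSq u) * (r^2 - Complex.normSq v)
      = Complex.normSq (((r^2 : ℝ) : ℂ) - (starRingEnd ℂ) u * v) := by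
  simp only [Complex.normSq_apply, Complex.sub_re, Complex.sub_im, Complex.mul_re,
    Complex.mul_im, Complex.conj_re, Complex.conj_im, Complex.ofReal_re, Complex.ofReal_im]
  ring

lemma abs_rsq : True := trivial

lemma key_ineq1 {r : ℝ} (hr : 0 < r) {u v : ℂ} (hu : ‖u‖ ≤ r / 2)
    (hv : ‖v‖ ≤ r / 2) :
    5 * (r * ‖v - u‖) ≤ 4 * ‖((r^2 : ℝ) : ℂ) - (starRingEnd ℂ) u * v‖ := by
  have hid := normSq_blaschke_identity r u v
  have hu2 : Complex.normSq u ≤ (r/2)^2 := by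
    rw [← Complex.sq_norm]; exact pow_le_pow_left₀ (norm_nonneg u) hu 2
  have hv2 : Complex.normSq v ≤ (r/2)^2 := by
    rw [← Complex.sq_norm]; exact pow_le_pow_left₀ (norm_nonneg v) hv 2
  have habs : ‖((r^2 : ℝ) : ℂ)‖ = r^2 := by
    rw [Complex.norm_real, Real.norm_eq_abs]; exact abs_of_nonneg (by positivity)
  have hNle : ‖((r^2 : ℝ) : ℂ) - (starRingEnd ℂ) u * v‖ ≤ r^2 + (r/2) * (r/2) := by
    have t1 : ‖((r^2 : ℝ) : ℂ) - (starRingEnd ℂ) u * v‖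
        ≤ ‖((r^2 : ℝ) : ℂ)‖ + ‖(starRingEnd ℂ) u * v‖ := norm_sub_le _ _
    rw [habs] at t1
    have t2 : ‖(starRingEnd ℂ) u * v‖ ≤ (r/2) * (r/2) := by
      rw [norm_mul, Complex.norm_conj]
      exact mul_le_mul hu hv (norm_nonneg v) (by positivity)
    linarith
  have hN2 : Complex.normSq (((r^2 : ℝ) : ℂ) - (starRingEnd ℂ) u * v) ≤ (r^2 + (r/2)*(r/2))^2 := by
    rw [← Complex.sq_norm]
    exact pow_le_pow_left₀ (norm_nonneg _) hNle 2
  have hP : (3/4*r^2) * (3/4*r^2) ≤ (r^2 - Complex.normSq u) * (r^2 - Complex.normSq v) := by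
    apply mul_le_mul (by nlinarith) (by nlinarith) (by nlinarith) (by nlinarith)
  apply le_of_pow_le_pow_left₀ two_ne_zero (by positivity)
  have hL : (5 * (r * ‖v - u‖))^2 = 25 * (r^2 * Complex.normSq (v - u)) := by
    rw [mul_pow, mul_pow, Complex.sq_norm]; ring
  have hR : (4 * ‖((r^2 : ℝ) : ℂ) - (starRingEnd ℂ) u * v‖)^2
      = 16 * Complex.normSq (((r^2 : ℝ) : ℂ) - (starRingEnd ℂ) u * v) := by
    rw [mul_pow, Complex.sq_norm]; ring
  rw [hL, hR]
  nlinarith [Complex.normSq_nonneg (v - u)]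

lemma key_ineq2 {r : ℝ} (hr : 0 < r) {u v : ℂ} (hu : ‖u‖ ≤ r / 2)
    (hv : ‖v‖ = 49/50 * r) :
    Real.sqrt 21 * ‖((r^2 : ℝ) : ℂ) - (starRingEnd ℂ) u * v‖
      ≤ 5 * (r * ‖v - u‖) := by
  have hid := normSq_blaschke_identity r u v
  have hu2 : Complex.normSq u ≤ (r/2)^2 := by
    rw [← Complex.sq_norm]; exact pow_le_pow_left₀ (norm_nonneg u) hu 2
  have hv2 : Complex.normSq v = (49/50*r)^2 := by rw [← Complex.sq_norm, hv]
  have habs : ‖((r^2 : ℝ) : ℂ)‖ = r^2 := by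
    rw [Complex.norm_real, Real.norm_eq_abs]; exact abs_of_nonneg (by positivity)
  have hNge : (51/100) * r^2 ≤ ‖((r^2 : ℝ) : ℂ) - (starRingEnd ℂ) u * v‖ := by
    have h1 : ‖((r^2 : ℝ) : ℂ)‖ - ‖(starRingEnd ℂ) u * v‖
        ≤ ‖((r^2 : ℝ) : ℂ) - (starRingEnd ℂ) u * v‖ :=
      norm_sub_norm_le _ _
    rw [habs] at h1
    have h2 : ‖(starRingEnd ℂ) u * v‖ ≤ (r/2) * (49/50*r) := by
      rw [norm_mul, Complex.norm_conj, hv]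
      exact mul_le_mul_of_nonneg_right hu (by positivity)
    nlinarith
  have hN2 : ((51/100) * r^2)^2 ≤ Complex.normSq (((r^2 : ℝ) : ℂ) - (starRingEnd ℂ) u * v) := by
    rw [← Complex.sq_norm]
    exact pow_le_pow_left₀ (by positivity) hNge 2
  apply le_of_pow_le_pow_left₀ two_ne_zero (by positivity)
  have hL : (Real.sqrt 21 * ‖((r^2 : ℝ) : ℂ) - (starRingEnd ℂ) u * v‖)^2
      = 21 * Complex.normSq (((r^2 : ℝ) : ℂ) - (starRingEnd ℂ) u * v) := by
    rw [mul_pow, Complex.sq_norm, Real.sq_sqrt (by norm_num : (21:ℝ) ≥ 0)]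
  have hR : (5 * (r * ‖v - u‖))^2 = 25 * (r^2 * Complex.normSq (v - u)) := by
    rw [mul_pow, mul_pow, Complex.sq_norm]; ring
  rw [hL, hR]
  nlinarith [Complex.normSq_nonneg (v - u), Complex.normSq_nonneg u, sq_nonneg r]

/-! ### Global facts about zeros -/

lemma not_eventually_zero {w : ℂ} {r : ℝ} {h : ℂ → ℂ} (hd : DifferentiableOn ℂ h (ball w r))
    {z₁ : ℂ} (hz₁ : z₁ ∈ ball w r) (hz₁0 : h z₁ ≠ 0) {z : ℂ} (hz : z ∈ ball w r) :
    ¬ ∀ᶠ y in 𝓝 z, h y = 0 := by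
  intro hev
  have hA : AnalyticOnNhd ℂ h (ball w r) := hd.analyticOnNhd isOpen_ball
  have hev' : h =ᶠ[𝓝 z] (0 : ℂ → ℂ) := by filter_upwards [hev] with y hy; simpa using hy
  have := hA.eqOn_zero_of_preconnected_of_eventuallyEq_zero
    (convex_ball w r).isPreconnected hz hev'
  exact hz₁0 (this hz₁)

lemma zeros_finite {w : ℂ} {r : ℝ} (hr : 0 < r) {h : ℂ → ℂ}
    (hd : DifferentiableOn ℂ h (ball w r)) {z₁ : ℂ} (hz₁ : z₁ ∈ ball w r) (hz₁0 : h z₁ ≠ 0) :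
    {z : ℂ | z ∈ closedBall w (r/2) ∧ h z = 0}.Finite := by
  set S := {z : ℂ | z ∈ closedBall w (r/2) ∧ h z = 0} with hSdef
  have hsub : S ⊆ closedBall w (r/2) := fun z hz => hz.1
  have hsub' : closedBall w (r/2) ⊆ ball w r := closedBall_subset_ball (by linarith)
  have hclosed : IsClosed S := by
    have hS2 : S = closedBall w (r/2) ∩ h ⁻¹' {0} := by
      ext z; simp [hSdef]
    rw [hS2]
    exact (hd.continuousOn.mono hsub').preimage_isClosed_of_isClosed
      isClosed_closedBall isClosed_singleton
  have hcpt : IsCompact S :=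
    (isCompact_closedBall w (r/2)).of_isClosed_subset hclosed hsub
  have hdisc : DiscreteTopology S := by
    rw [discreteTopology_subtype_iff]
    intro x hx
    have hxball : x ∈ ball w r := hsub' (hsub hx)
    have hA : AnalyticAt ℂ h x := (hd.analyticOnNhd isOpen_ball) x hxball
    rcases hA.eventually_eq_zero_or_eventually_ne_zero with hcase | hcase
    · exact absurd hcase (not_eventually_zero hd hz₁ hz₁0 hxball)
    · have h1 : ∀ᶠ z in 𝓝[≠] x ⊓ Filter.principal S, h z ≠ 0 :=
        hcase.filter_mono inf_le_left
      have h2 : ∀ᶠ z in 𝓝[≠] x ⊓ Filter.principal S, z ∈ S :=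
        Filter.eventually_inf_principal.mpr (Filter.Eventually.of_forall fun z hz => hz)
      have h3 : ∀ᶠ z in 𝓝[≠] x ⊓ Filter.principal S, False := by
        filter_upwards [h1, h2] with z hz1 hz2
        exact hz1 hz2.2
      exact Filter.eventually_false_iff_eq_bot.mp h3
  exact hcpt.finite (isDiscrete_iff_discreteTopology.mpr hdisc)

lemma psi_num_ne_zero {w a z : ℂ} {r : ℝ} (hr : 0 < r) (ha : ‖a - w‖ ≤ r/2)
    (hz : ‖z - w‖ < r) :
    (((r^2 : ℝ) : ℂ) - (starRingEnd ℂ) (a - w) * (z - w)) ≠ 0 := by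
  intro h0
  have h1 : ‖(starRingEnd ℂ) (a - w) * (z - w)‖ < r^2 := by
    rw [norm_mul, Complex.norm_conj]
    calc ‖a - w‖ * ‖z - w‖ ≤ (r/2) * ‖z - w‖ :=
          mul_le_mul_of_nonneg_right ha (norm_nonneg _)
      _ < r^2 := by nlinarith [norm_nonneg (z - w)]
  have h2 : ((r^2 : ℝ) : ℂ) = (starRingEnd ℂ) (a - w) * (z - w) := sub_eq_zero.mp h0
  have habs : ‖((r^2 : ℝ) : ℂ)‖ = r^2 := by
    rw [Complex.norm_real, Real.norm_eq_abs]; exact abs_of_nonneg (by positivity)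
  rw [← h2, habs] at h1
  exact lt_irrefl _ h1

lemma vanishingOrder_of_ne_zero {h : ℂ → ℂ} {z : ℂ} (h0 : h z ≠ 0) :
    vanishingOrder h z = 0 :=
  Nat.sInf_eq_zero.mpr (Or.inl (by simpa [iteratedDeriv_zero] using h0))

/-- One step of the zero-removal process: divide `h` by a Blaschke-type factor for a zero `a`. -/
lemma step {w : ℂ} {r : ℝ} (hr : 0 < r) {h : ℂ → ℂ}
    (hd : DifferentiableOn ℂ h (ball w r))
    {z₁ : ℂ} (hz₁ : z₁ ∈ ball w r) (hz₁0 : h z₁ ≠ 0)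
    {a : ℂ} (haK : a ∈ closedBall w (r/2)) (ha0 : h a = 0) :
    ∃ g : ℂ → ℂ, DifferentiableOn ℂ g (ball w r) ∧
      (∃ z₂ ∈ ball w r, g z₂ ≠ 0) ∧
      (∀ z ∈ closedBall w (r/2), z ≠ a → (g z = 0 ↔ h z = 0)) ∧
      (∀ z ∈ closedBall w (r/2), z ≠ a → h z = 0 → vanishingOrder g z = vanishingOrder h z) ∧
      (vanishingOrder h a = vanishingOrder g a + 1) ∧
      (∀ M : ℝ, (∀ z ∈ sphere w (49/50 * r), ‖h z‖ ≤ M) →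
        ∀ z ∈ sphere w (49/50 * r), ‖g z‖ ≤ M * (5 / Real.sqrt 21)) ∧
      (∀ z₀ ∈ closedBall w (r/2), ‖h z₀‖ ≤ (4/5) * ‖g z₀‖) := by
  have hsub' : closedBall w (r/2) ⊆ ball w r := closedBall_subset_ball (by linarith)
  have haball : a ∈ ball w r := hsub' haK
  have ha_abs : ‖a - w‖ ≤ r/2 := by
    rw [← Complex.dist_eq]; exact mem_closedBall.mp haK
  set h₁ : ℂ → ℂ := dslope h a with hh₁
  have hd₁ : DifferentiableOn ℂ h₁ (ball w r) :=
    (Complex.differentiableOn_dslope (isOpen_ball.mem_nhds haball)).mpr hd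
  set ψ : ℂ → ℂ := fun z => (((r^2 : ℝ) : ℂ) - (starRingEnd ℂ) (a - w) * (z - w)) / (r : ℂ)
    with hψdef
  have hψdiff : Differentiable ℂ ψ := by
    apply Differentiable.div_const
    exact (differentiable_const _).sub ((differentiable_const _).mul
      (differentiable_id.sub (differentiable_const _)))
  have hψana : ∀ z : ℂ, AnalyticAt ℂ ψ z := fun z =>
    (hψdiff.differentiableOn.analyticOnNhd isOpen_univ) z (Set.mem_univ z)
  have hψne : ∀ z ∈ ball w r, ψ z ≠ 0 := by
    intro z hz
    apply div_ne_zero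
    · exact psi_num_ne_zero hr ha_abs (by rw [← Complex.dist_eq]; exact mem_ball.mp hz)
    · exact Complex.ofReal_ne_zero.mpr hr.ne'
  set g : ℂ → ℂ := fun z => h₁ z * ψ z with hgdef
  have hdg : DifferentiableOn ℂ g (ball w r) := hd₁.mul hψdiff.differentiableOn
  have hglob : ∀ z : ℂ, h z = (z - a) * h₁ z := by
    intro z
    have := sub_smul_dslope h a z
    rw [smul_eq_mul, ha0, sub_zero] at this
    exact this.symm
  -- absolute value identity
  have habs_r : ‖((r : ℝ) : ℂ)‖ = r := by
    rw [Complex.norm_real, Real.norm_eq_abs]; exact abs_of_pos hr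
  have hident : ∀ z : ℂ, ‖g z‖ * (‖z - a‖ * r)
      = ‖h z‖ * ‖((r^2 : ℝ) : ℂ) - (starRingEnd ℂ) (a - w) * (z - w)‖ := by
    intro z
    have h1 : ‖h z‖ = ‖z - a‖ * ‖h₁ z‖ := by
      rw [hglob z, norm_mul]
    have h2 : ‖g z‖ = ‖h₁ z‖ *
        (‖((r^2 : ℝ) : ℂ) - (starRingEnd ℂ) (a - w) * (z - w)‖ / r) := by
      rw [hgdef]
      simp only [norm_mul, hψdef, norm_div, habs_r]
    rw [h1, h2]
    field_simp
  -- analyticity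
  have hAh : AnalyticOnNhd ℂ h (ball w r) := hd.analyticOnNhd isOpen_ball
  have hAh₁ : AnalyticOnNhd ℂ h₁ (ball w r) := hd₁.analyticOnNhd isOpen_ball
  have hAg : AnalyticOnNhd ℂ g (ball w r) := hdg.analyticOnNhd isOpen_ball
  refine ⟨g, hdg, ?_, ?_, ?_, ?_, ?_, ?_⟩
  · -- nonvanishing witness
    refine ⟨z₁, hz₁, ?_⟩
    have hz₁a : z₁ ≠ a := fun he => hz₁0 (he ▸ ha0)
    have h₁ne : h₁ z₁ ≠ 0 := by
      intro he
      apply hz₁0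
      rw [hglob z₁, he, mul_zero]
    exact mul_ne_zero h₁ne (hψne z₁ hz₁)
  · -- zero iff
    intro z hz hza
    have hψz : ψ z ≠ 0 := hψne z (hsub' hz)
    have hza' : (z - a) ≠ 0 := sub_ne_zero.mpr hza
    constructor
    · intro hg0
      have : h₁ z = 0 := by
        rcases mul_eq_zero.mp hg0 with h' | h'
        · exact h'
        · exact absurd h' hψz
      rw [hglob z, this, mul_zero]
    · intro hh0
      have : h₁ z = 0 := by
        have := hglob z
        rw [hh0] at this
        rcases mul_eq_zero.mp this.symm with h' | h'
        · exact absurd h' hza'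
        · exact h'
      rw [hgdef]
      simp only [this, zero_mul]
  · -- order equality away from a
    intro z hz hza hh0
    have hzball : z ∈ ball w r := hsub' hz
    have hAz : AnalyticAt ℂ h z := hAh z hzball
    have hnev : ¬ ∀ᶠ y in 𝓝 z, h y = 0 := not_eventually_zero hd hz₁ hz₁0 hzball
    obtain ⟨k, hk⟩ := exists_order_eq_nat hAz hnev
    obtain ⟨G, hG, hGne, hev⟩ := hAz.analyticOrderAt_eq_natCast.mp hk
    have hAgz : AnalyticAt ℂ g z := hAg z hzball
    have hordg : analyticOrderAt g z = (k : ℕ∞) := by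
      refine hAgz.analyticOrderAt_eq_natCast.mpr
        ⟨fun z' => G z' * (ψ z' * (z' - a)⁻¹),
         hG.mul ((hψana z).mul (((analyticAt_id).sub analyticAt_const).inv
           (sub_ne_zero.mpr hza))),
         ?_, ?_⟩
      · exact mul_ne_zero hGne (mul_ne_zero (hψne z hzball)
          (inv_ne_zero (sub_ne_zero.mpr hza)))
      · filter_upwards [hev, eventually_ne_nhds hza] with z' h1 h2
        have hza' : z' - a ≠ 0 := sub_ne_zero.mpr h2
        have hh₁ : h₁ z' = h z' / (z' - a) := by
          rw [hh₁, dslope_of_ne h h2, slope_def_field, ha0, sub_zero]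
        rw [hgdef]
        simp only [hh₁, h1, smul_eq_mul]
        field_simp
    rw [vanishingOrder_eq_of_order_eq hAgz hordg, vanishingOrder_eq_of_order_eq hAz hk]
  · -- order drop at a
    have hAa : AnalyticAt ℂ h a := hAh a haball
    have hnev : ¬ ∀ᶠ y in 𝓝 a, h y = 0 := not_eventually_zero hd hz₁ hz₁0 haball
    obtain ⟨k, hk⟩ := exists_order_eq_nat hAa hnev
    have hkne : k ≠ 0 := order_ne_zero_of_eq_zero hAa ha0 hk
    obtain ⟨k', rfl⟩ : ∃ k', k = k' + 1 :=
      ⟨k - 1, (Nat.succ_pred_eq_of_pos (Nat.pos_of_ne_zero hkne)).symm⟩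
    have hA₁a : AnalyticAt ℂ h₁ a := hAh₁ a haball
    have hord₁ : analyticOrderAt h₁ a = (k' : ℕ∞) := order_dslope hAa hA₁a ha0 hk
    have hAga : AnalyticAt ℂ g a := hAg a haball
    have hordg : analyticOrderAt g a = (k' : ℕ∞) :=
      order_mul_unit hA₁a (hψana a) (hψne a haball) hAga hord₁
    rw [vanishingOrder_eq_of_order_eq hAa hk, vanishingOrder_eq_of_order_eq hAga hordg]
  · -- sphere bound
    intro M hM z hz
    have hzd : ‖z - w‖ = 49/50 * r := by
      rw [← Complex.dist_eq]; exact mem_sphere.mp hz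
    have hzball : z ∈ ball w r := by
      rw [mem_ball, Complex.dist_eq, hzd]; linarith
    have hza : z ≠ a := by
      intro he
      rw [he] at hzd
      rw [hzd] at ha_abs
      linarith
    have hKI : Real.sqrt 21 * ‖((r^2 : ℝ) : ℂ) - (starRingEnd ℂ) (a-w) * (z-w)‖
        ≤ 5 * (r * ‖z - a‖) := by
      have := key_ineq2 hr ha_abs hzd
      rwa [sub_sub_sub_cancel_right] at this
    have hhM : ‖h z‖ ≤ M := hM z hz
    have hM0 : 0 ≤ M := le_trans (norm_nonneg _) hhM
    have s21 : (0:ℝ) < Real.sqrt 21 := Real.sqrt_pos.mpr (by norm_num)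
    have habsza : (0:ℝ) < ‖z - a‖ := by
      rw [norm_pos_iff]; exact sub_ne_zero.mpr hza
    have step1 : ‖h z‖ *
        (Real.sqrt 21 * ‖((r^2 : ℝ) : ℂ) - (starRingEnd ℂ) (a-w) * (z-w)‖)
        ≤ M * (5 * (r * ‖z - a‖)) :=
      mul_le_mul hhM hKI (by positivity) hM0
    have step2 : (‖g z‖ * Real.sqrt 21) * (‖z - a‖ * r)
        = ‖h z‖ *
          (Real.sqrt 21 * ‖((r^2 : ℝ) : ℂ) - (starRingEnd ℂ) (a-w) * (z-w)‖) := by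
      linear_combination Real.sqrt 21 * hident z
    have step3 : (‖g z‖ * Real.sqrt 21) * (‖z - a‖ * r)
        ≤ (5 * M) * (‖z - a‖ * r) := by
      rw [step2]
      calc ‖h z‖ *
            (Real.sqrt 21 * ‖((r^2 : ℝ) : ℂ) - (starRingEnd ℂ) (a-w) * (z-w)‖)
          ≤ M * (5 * (r * ‖z - a‖)) := step1
        _ = (5 * M) * (‖z - a‖ * r) := by ring
    have step4 : ‖g z‖ * Real.sqrt 21 ≤ 5 * M :=
      le_of_mul_le_mul_right step3 (by positivity)
    rw [show M * (5 / Real.sqrt 21) = 5 * M / Real.sqrt 21 by ring, le_div_iff₀ s21]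
    exact step4
  · -- evaluation bound
    intro z₀ hz₀
    by_cases hza : z₀ = a
    · rw [hza, ha0]
      simp only [norm_zero]
      positivity
    · have hz₀ball : z₀ ∈ ball w r := hsub' hz₀
      have hz₀abs : ‖z₀ - w‖ ≤ r/2 := by
        rw [← Complex.dist_eq]; exact mem_closedBall.mp hz₀
      have hKI : 5 * (r * ‖z₀ - a‖)
          ≤ 4 * ‖((r^2 : ℝ) : ℂ) - (starRingEnd ℂ) (a-w) * (z₀-w)‖ := by
        have := key_ineq1 hr ha_abs hz₀abs
        rwa [sub_sub_sub_cancel_right] at this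
      have hnum0pos : (0:ℝ) <
          ‖((r^2 : ℝ) : ℂ) - (starRingEnd ℂ) (a-w) * (z₀-w)‖ := by
        rw [norm_pos_iff]
        exact psi_num_ne_zero hr ha_abs (by rw [← Complex.dist_eq]; exact mem_ball.mp hz₀ball)
      have t2 : ‖g z₀‖ * (5 * (r * ‖z₀ - a‖))
          ≤ ‖g z₀‖ *
            (4 * ‖((r^2 : ℝ) : ℂ) - (starRingEnd ℂ) (a-w) * (z₀-w)‖) :=
        mul_le_mul_of_nonneg_left hKI (norm_nonneg _)
      have t3 : (5 * ‖h z₀‖) *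
            ‖((r^2 : ℝ) : ℂ) - (starRingEnd ℂ) (a-w) * (z₀-w)‖
          ≤ (4 * ‖g z₀‖) *
            ‖((r^2 : ℝ) : ℂ) - (starRingEnd ℂ) (a-w) * (z₀-w)‖ := by
        nlinarith [hident z₀, t2]
      have t4 : 5 * ‖h z₀‖ ≤ 4 * ‖g z₀‖ :=
        le_of_mul_le_mul_right t3 hnum0pos
      linarith

lemma main_induction {w : ℂ} {r : ℝ} (hr : 0 < r) :
    ∀ (n : ℕ) (h : ℂ → ℂ), DifferentiableOn ℂ h (ball w r) →
      (∃ z₁ ∈ ball w r, h z₁ ≠ 0) →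
      ∀ M : ℝ, (∀ z ∈ sphere w (49/50 * r), ‖h z‖ ≤ M) →
      ∀ s : Finset ℂ, (∀ z ∈ s, z ∈ closedBall w (r/2)) → (∀ z ∈ s, h z = 0) →
      (n ≤ ∑ z ∈ s, vanishingOrder h z) →
      ∀ z₀ ∈ closedBall w (r/2), ‖h z₀‖ ≤ M * (4 / Real.sqrt 21) ^ n := by
  intro n
  induction n with
  | zero =>
    intro h hd _hne M hM s _ _ _ z₀ hz₀
    simp only [pow_zero, mul_one]
    have hρpos : (0:ℝ) < 49/50*r := by linarith
    have hcl : closure (ball w (49/50*r)) = closedBall w (49/50*r) :=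
      closure_ball w hρpos.ne'
    have hcb : closedBall w (49/50*r) ⊆ ball w r := closedBall_subset_ball (by linarith)
    have hdc : DiffContOnCl ℂ h (ball w (49/50*r)) :=
      DifferentiableOn.diffContOnCl (by rw [hcl]; exact hd.mono hcb)
    have hfront : ∀ z ∈ frontier (ball w (49/50*r)), ‖h z‖ ≤ M := by
      intro z hz
      rw [frontier_ball w hρpos.ne'] at hz
      exact hM z hz
    have hmem : z₀ ∈ closure (ball w (49/50*r)) := by
      rw [hcl]
      exact closedBall_subset_closedBall (by linarith) hz₀
    exact Complex.norm_le_of_forall_mem_frontier_norm_le isBounded_ball hdc hfront hmem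
  | succ n ih =>
    intro h hd hne M hM s hsK hs0 hsum z₀ hz₀
    have hsne : s.Nonempty := by
      by_contra hemp
      rw [Finset.not_nonempty_iff_eq_empty] at hemp
      rw [hemp] at hsum
      simp at hsum
    obtain ⟨a, ha⟩ := hsne
    obtain ⟨z₁, hz₁, hz₁0⟩ := hne
    obtain ⟨g, hdg, hgne, hgzero_iff, hgord, hgord_a, hgsphere, hgeval⟩ :=
      step hr hd hz₁ hz₁0 (hsK a ha) (hs0 a ha)
    have hcount : ∑ z ∈ s, vanishingOrder h z = (∑ z ∈ s, vanishingOrder g z) + 1 := by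
      rw [← Finset.add_sum_erase s _ ha, ← Finset.add_sum_erase s (fun z => vanishingOrder g z) ha]
      have hsame : ∑ z ∈ s.erase a, vanishingOrder h z = ∑ z ∈ s.erase a, vanishingOrder g z :=
        Finset.sum_congr rfl (fun z hz =>
          (hgord z (hsK z (Finset.mem_of_mem_erase hz)) (Finset.ne_of_mem_erase hz)
            (hs0 z (Finset.mem_of_mem_erase hz))).symm)
      rw [hgord_a, hsame]
      ring
    have hfinal : ∀ z₀' ∈ closedBall w (r/2),
        ‖g z₀'‖ ≤ (M * (5 / Real.sqrt 21)) * (4 / Real.sqrt 21) ^ n → True := fun _ _ _ => trivial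
    have hbound : ‖g z₀‖ ≤ (M * (5 / Real.sqrt 21)) * (4 / Real.sqrt 21) ^ n := by
      by_cases hga : g a = 0
      · have hle : n ≤ ∑ z ∈ s, vanishingOrder g z := by rw [hcount] at hsum; omega
        refine ih g hdg hgne (M * (5 / Real.sqrt 21)) (hgsphere M hM) s hsK ?_ hle z₀ hz₀
        intro z hz
        by_cases hza : z = a
        · rw [hza]; exact hga
        · exact (hgzero_iff z (hsK z hz) hza).mpr (hs0 z hz)
      · have hga_ord : vanishingOrder g a = 0 := vanishingOrder_of_ne_zero hga
        have h1 : ∑ z ∈ s, vanishingOrder g z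
            = vanishingOrder g a + ∑ z ∈ s.erase a, vanishingOrder g z :=
          (Finset.add_sum_erase s _ ha).symm
        have hle : n ≤ ∑ z ∈ s.erase a, vanishingOrder g z := by
          rw [hcount] at hsum
          omega
        refine ih g hdg hgne (M * (5 / Real.sqrt 21)) (hgsphere M hM) (s.erase a)
          (fun z hz => hsK z (Finset.mem_of_mem_erase hz)) ?_ hle z₀ hz₀
        intro z hz
        exact (hgzero_iff z (hsK z (Finset.mem_of_mem_erase hz))
          (Finset.ne_of_mem_erase hz)).mpr (hs0 z (Finset.mem_of_mem_erase hz))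
    calc ‖h z₀‖ ≤ (4/5) * ‖g z₀‖ := hgeval z₀ hz₀
      _ ≤ (4/5) * ((M * (5 / Real.sqrt 21)) * (4 / Real.sqrt 21) ^ n) := by
          exact mul_le_mul_of_nonneg_left hbound (by norm_num)
      _ = M * (4 / Real.sqrt 21) ^ (n+1) := by
          rw [pow_succ]
          ring

lemma four_lt_sqrt21 : (4:ℝ) < Real.sqrt 21 :=
  (Real.lt_sqrt (by norm_num)).mpr (by norm_num)

end JensenAux

/-- Jensen's bound: there is an absolute constant `C > 0` such that for every function `h`
holomorphic on a disc `D(w,r)`, bounded by `M` there, and with `|h| ≥ m` somewhere on the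
closed half-disc (with `m > 0`), the number of zeros of `h` in the closed disc of radius
`r/2`, counted with multiplicity, is at most `C log(M/m)`. -/
theorem jensen_zero_count_bound :
    ∃ C : ℝ, 0 < C ∧
      ∀ (w : ℂ) (r : ℝ), 0 < r →
        ∀ h : ℂ → ℂ, DifferentiableOn ℂ h (ball w r) →
          ∀ M m : ℝ, (∀ z ∈ ball w r, ‖h z‖ ≤ M) →
            0 < m → (∃ z ∈ closedBall w (r / 2), m ≤ ‖h z‖) →
            (∑' z : {z : ℂ // z ∈ closedBall w (r / 2) ∧ h z = 0},
                ((vanishingOrder h z : ℕ∞) : ℝ≥0∞))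
              ≤ ENNReal.ofReal (C * Real.log (M / m)) := by
  classical
  have h4 : (4:ℝ) < Real.sqrt 21 := JensenAux.four_lt_sqrt21
  have hlpos : (0:ℝ) < Real.log (Real.sqrt 21 / 4) := Real.log_pos (by
    rw [lt_div_iff₀ (by norm_num : (0:ℝ) < 4)]; linarith)
  refine ⟨(Real.log (Real.sqrt 21 / 4))⁻¹, inv_pos.mpr hlpos, ?_⟩
  intro w r hr h hd M m hM hm hex
  obtain ⟨zw, hzwK, hzwm⟩ := hex
  have hzw0 : h zw ≠ 0 := by
    intro he
    rw [he] at hzwm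
    simp only [norm_zero] at hzwm
    linarith
  have hsub' : closedBall w (r/2) ⊆ ball w r := closedBall_subset_ball (by linarith)
  have hzwball : zw ∈ ball w r := hsub' hzwK
  have hfin : Set.Finite {z : ℂ | z ∈ closedBall w (r/2) ∧ h z = 0} :=
    JensenAux.zeros_finite hr hd hzwball hzw0
  set N : ℕ := ∑ z ∈ hfin.toFinset, vanishingOrder h z with hN
  have hsph : ∀ z ∈ sphere w (49/50*r), ‖h z‖ ≤ M := by
    intro z hz
    apply hM
    rw [mem_ball, mem_sphere.mp hz]
    linarith
  have hind := JensenAux.main_induction hr N h hd ⟨zw, hzwball, hzw0⟩ M hsph hfin.toFinset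
    (fun z hz => ((hfin.mem_toFinset).mp hz).1) (fun z hz => ((hfin.mem_toFinset).mp hz).2)
    le_rfl zw hzwK
  have hmMq : m ≤ M * (4/Real.sqrt 21)^N := le_trans hzwm hind
  have hM0 : 0 < M := lt_of_lt_of_le hm (le_trans hzwm (hM zw hzwball))
  have s21 : (0:ℝ) < Real.sqrt 21 := by linarith
  have key : (N:ℝ) ≤ (Real.log (Real.sqrt 21 / 4))⁻¹ * Real.log (M/m) := by
    have hq : m / M ≤ (4/Real.sqrt 21)^N := by
      rw [div_le_iff₀ hM0]
      calc m ≤ M * (4/Real.sqrt 21)^N := hmMq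
        _ = (4/Real.sqrt 21)^N * M := by ring
    have hlog := Real.log_le_log (by positivity : (0:ℝ) < m / M) hq
    rw [Real.log_pow, Real.log_div hm.ne' hM0.ne'] at hlog
    have hlq : Real.log (4/Real.sqrt 21) = - Real.log (Real.sqrt 21 / 4) := by
      rw [← Real.log_inv, inv_div]
    rw [hlq] at hlog
    have hMm : Real.log (M/m) = Real.log M - Real.log m := Real.log_div hM0.ne' hm.ne'
    rw [hMm, inv_mul_eq_div, le_div_iff₀ hlpos]
    nlinarith
  have htsum : (∑' z : {z : ℂ // z ∈ closedBall w (r / 2) ∧ h z = 0},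
      ((vanishingOrder h z : ℕ∞) : ℝ≥0∞)) = ((N : ℕ) : ℝ≥0∞) := by
    have h1 : (∑' z : {z : ℂ // z ∈ closedBall w (r / 2) ∧ h z = 0},
        ((vanishingOrder h z : ℕ∞) : ℝ≥0∞))
        = ∑' z : ℂ, Set.indicator {z : ℂ | z ∈ closedBall w (r/2) ∧ h z = 0}
            (fun z => ((vanishingOrder h z : ℕ∞) : ℝ≥0∞)) z :=
      tsum_subtype {z : ℂ | z ∈ closedBall w (r/2) ∧ h z = 0}
        (fun z => ((vanishingOrder h z : ℕ∞) : ℝ≥0∞))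
    rw [h1, tsum_eq_sum (s := hfin.toFinset)
      (fun z hz => Set.indicator_of_notMem (fun hmem => hz ((hfin.mem_toFinset).mpr hmem)) _)]
    rw [Finset.sum_congr rfl
      (fun z hz => Set.indicator_of_mem ((hfin.mem_toFinset).mp hz) _)]
    rw [hN]
    push_cast
    rfl
  rw [htsum, ← ENNReal.ofReal_natCast]
  exact ENNReal.ofReal_le_ofReal key

end
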